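/- Let A and B be square complex matrices of sizes m and n respectively, with disjoint spectra. Then the Sylvester map z ↦ A·z − z·B from the space of m×n complex matrices to itself is a linear isomorphism. -/

import Mathlib

open Polynomial Matrix

lemma eval_charpoly_eq_det {k : ℕ} (M : Matrix (Fin k) (Fin k) ℂ) (μ : ℂ) :
    (M.charpoly).eval μ = (Matrix.scalar (Fin k) μ - M).det := by
  rw [Matrix.charpoly, eval_det, matPolyEquiv_charmatrix]
  simp

lemma mem_spectrum_iff_isRoot {k : ℕ} (M : Matrix (Fin k) (Fin k) ℂ) (μ : ℂ) :
    μ ∈ spectrum ℂ M ↔ (M.charpoly).IsRoot μ := by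
  rw [spectrum.mem_iff, Polynomial.IsRoot, eval_charpoly_eq_det,
    Matrix.isUnit_iff_isUnit_det, isUnit_iff_ne_zero, not_ne_iff]
  have : (algebraMap ℂ (Matrix (Fin k) (Fin k) ℂ)) μ = Matrix.scalar (Fin k) μ := rfl
  rw [this]

/-- **Sylvester's theorem.** If `A` is an `m × m` complex matrix and `B` is an
`n × n` complex matrix with disjoint spectra (no common eigenvalue), then the
Sylvester map `z ↦ A * z - z * B` on `m × n` complex matrices is a linear
isomorphism (it is linear, and we assert bijectivity). -/
theorem sylvester_bijective (m n : ℕ)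
    (A : Matrix (Fin m) (Fin m) ℂ) (B : Matrix (Fin n) (Fin n) ℂ)
    (hdisj : ∀ μ : ℂ, μ ∈ spectrum ℂ A → μ ∉ spectrum ℂ B) :
    Function.Bijective (fun z : Matrix (Fin m) (Fin n) ℂ => A * z - z * B) := by
  -- package the Sylvester map as a linear map
  let L : Matrix (Fin m) (Fin n) ℂ →ₗ[ℂ] Matrix (Fin m) (Fin n) ℂ :=
    { toFun := fun z => A * z - z * B
      map_add' := fun x y => by simp [Matrix.add_mul, Matrix.mul_add]; abel
      map_smul' := fun c x => by
        simp [Matrix.mul_smul, Matrix.smul_mul, smul_sub] }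
  -- injectivity
  have hinj : Function.Injective L := by
    rw [injective_iff_map_eq_zero]
    intro z hz
    have hAz : A * z = z * B := sub_eq_zero.mp hz
    -- intertwining for powers, hence for polynomials
    have hpow : ∀ k : ℕ, A ^ k * z = z * B ^ k := by
      intro k
      induction k with
      | zero => simp
      | succ k ih =>
        calc A ^ (k + 1) * z = A * (A ^ k * z) := by
              rw [pow_succ', Matrix.mul_assoc]
          _ = A * (z * B ^ k) := by rw [ih]
          _ = (A * z) * B ^ k := by rw [Matrix.mul_assoc]
          _ = (z * B) * B ^ k := by rw [hAz]
          _ = z * B ^ (k + 1) := by rw [Matrix.mul_assoc, ← pow_succ']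
    have hpoly : ∀ p : ℂ[X], (aeval A p) * z = z * (aeval B p) := by
      intro p
      induction p using Polynomial.induction_on with
      | C a => simp [Algebra.algebraMap_eq_smul_one, Matrix.smul_mul, Matrix.mul_smul]
      | add p q hp hq => simp only [map_add, Matrix.add_mul, Matrix.mul_add, hp, hq]
      | monomial k a _ =>
        simp only [_root_.map_mul, map_pow, aeval_C, aeval_X]
        rw [Matrix.mul_assoc, hpow (k + 1), Algebra.algebraMap_eq_smul_one]
        simp [Algebra.algebraMap_eq_smul_one, Matrix.smul_mul, Matrix.mul_smul,
          Matrix.one_mul]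
    -- apply with the characteristic polynomial of `B`
    have hCH : (aeval A B.charpoly) * z = 0 := by
      rw [hpoly, Matrix.aeval_self_charpoly, Matrix.mul_zero]
    -- `aeval A B.charpoly` is a unit
    have hunit : IsUnit (aeval A B.charpoly) := by
      have hsplits : B.charpoly.Splits := IsAlgClosed.splits _
      have hfact := hsplits.eq_prod_roots_of_monic B.charpoly_monic
      rw [hfact]
      have key : ∀ s : Multiset ℂ, (∀ μ ∈ s, μ ∉ spectrum ℂ A) →
          IsUnit (aeval A (Multiset.map (fun a => X - C a) s).prod) := by
        intro s
        induction s using Multiset.induction with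
        | empty => intro _; simp
        | cons a t ih =>
          intro h
          rw [Multiset.map_cons, Multiset.prod_cons, _root_.map_mul]
          refine IsUnit.mul ?_ (ih fun μ hμ => h μ (Multiset.mem_cons_of_mem hμ))
          have hμA := h a (Multiset.mem_cons_self a t)
          rw [spectrum.mem_iff, not_not] at hμA
          simpa using hμA.neg
      apply key
      intro μ hμ
      have hμB : μ ∈ spectrum ℂ B :=
        (mem_spectrum_iff_isRoot B μ).mpr (Polynomial.isRoot_of_mem_roots hμ)
      exact fun h => hdisj μ h hμB
    obtain ⟨u, hu⟩ := hunit
    calc z = (↑u⁻¹ * ↑u : Matrix (Fin m) (Fin m) ℂ) * z := by rw [u.inv_mul, Matrix.one_mul]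
      _ = (↑u⁻¹ : Matrix (Fin m) (Fin m) ℂ) * (aeval A B.charpoly * z) := by rw [hu, Matrix.mul_assoc]
      _ = 0 := by rw [hCH, Matrix.mul_zero]
  have : Function.Bijective L :=
    ⟨hinj, (LinearMap.injective_iff_surjective).mp hinj⟩
  exact this
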